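/- Let μ and ν be probability measures on a measurable space X with μ ≪ ν, let f : X → Y be a measurable function into a measurable space Y, and let λ > 1. Then Measure.map f μ ≪ Measure.map f ν and ∫⁻ ((Measure.map f μ).rnDeriv (Measure.map f ν))^λ d(Measure.map f ν) ≤ ∫⁻ (μ.rnDeriv ν)^λ dν. (Data-processing inequality for the λ-th moment of the likelihood ratio; it implies that Rényi divergence, and hence zero-concentrated differential privacy, is preserved under measurable post-processing.) -/

import Mathlib

open MeasureTheory Real ENNReal

private lemma young_aux {l : ℝ} (hl : 1 < l) (m r : ℝ≥0∞) :
    r * m ^ (l - 1) ≤ ENNReal.ofReal ((l - 1) / l) * m ^ l + ENNReal.ofReal (1 / l) * r ^ l := by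
  have hl0 : (0:ℝ) < l := lt_trans one_pos hl
  have hl1 : (0:ℝ) < l - 1 := by linarith
  have hpq : l.HolderConjugate (l / (l - 1)) := Real.HolderConjugate.conjExponent hl
  have h := ENNReal.young_inequality r (m ^ (l - 1)) hpq
  have hmul : (m ^ (l - 1)) ^ (l / (l - 1)) = m ^ l := by
    rw [← ENNReal.rpow_mul]
    congr 1
    field_simp
  rw [hmul] at h
  refine h.trans (le_of_eq ?_)
  rw [add_comm]
  congr 1
  · rw [ENNReal.div_eq_inv_mul, ← ENNReal.ofReal_inv_of_pos (by positivity)]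
    rw [inv_div]
  · rw [ENNReal.div_eq_inv_mul, ← ENNReal.ofReal_inv_of_pos hl0, one_div]

private lemma sup_min_rpow {l : ℝ} (hl : 1 < l) {a : ℝ≥0∞} (ha : a ≠ ∞) :
    ⨆ n : ℕ, (min a (n : ℝ≥0∞)) ^ l = a ^ l := by
  have hl0 : (0:ℝ) ≤ l := le_of_lt (lt_trans one_pos hl)
  refine le_antisymm (iSup_le fun n => ENNReal.rpow_le_rpow (min_le_left _ _) hl0) ?_
  obtain ⟨n, hn⟩ := ENNReal.exists_nat_gt ha
  refine le_trans (le_of_eq ?_) (le_iSup (fun n : ℕ => (min a (n : ℝ≥0∞)) ^ l) n)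
  rw [min_eq_left hn.le]

/-- Data-processing inequality for the `l`-th moment of the likelihood ratio: the Rényi
divergence of order `l ∈ (1, ∞)` (and hence zero-concentrated differential privacy) is
preserved under measurable post-processing. -/
theorem data_processing_renyi {X Y : Type*} [MeasurableSpace X] [MeasurableSpace Y]
    (μ ν : Measure X) [IsProbabilityMeasure μ] [IsProbabilityMeasure ν] (hac : μ ≪ ν)
    (f : X → Y) (hf : Measurable f) (l : ℝ) (hl : 1 < l) :
    Measure.map f μ ≪ Measure.map f ν ∧
      ∫⁻ y, ((Measure.map f μ).rnDeriv (Measure.map f ν) y) ^ l ∂(Measure.map f ν) ≤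
        ∫⁻ x, (μ.rnDeriv ν x) ^ l ∂ν := by
  have hmac : Measure.map f μ ≪ Measure.map f ν := hac.map hf
  refine ⟨hmac, ?_⟩
  have hl0 : (0:ℝ) < l := lt_trans one_pos hl
  have hl1 : (0:ℝ) < l - 1 := by linarith
  haveI : IsProbabilityMeasure (Measure.map f μ) := Measure.isProbabilityMeasure_map hf.aemeasurable
  haveI : IsProbabilityMeasure (Measure.map f ν) := Measure.isProbabilityMeasure_map hf.aemeasurable
  set g : Y → ℝ≥0∞ := (Measure.map f μ).rnDeriv (Measure.map f ν) with hg
  have hgm : Measurable g := Measure.measurable_rnDeriv _ _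
  set J : ℝ≥0∞ := ∫⁻ x, (μ.rnDeriv ν x) ^ l ∂ν with hJ
  -- key truncated inequality
  have key : ∀ n : ℕ, ∫⁻ y, (min (g y) n) ^ l ∂(Measure.map f ν) ≤ J := by
    intro n
    set I : ℝ≥0∞ := ∫⁻ y, (min (g y) n) ^ l ∂(Measure.map f ν) with hI
    have hImeas : Measurable fun y => (min (g y) (n : ℝ≥0∞)) ^ l :=
      (hgm.min measurable_const).pow_const l
    have hIfin : I < ∞ := by
      calc I ≤ ∫⁻ _, ((n : ℝ≥0∞)) ^ l ∂(Measure.map f ν) := by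
              refine lintegral_mono fun y => ENNReal.rpow_le_rpow (min_le_right _ _) hl0.le
        _ = ((n : ℝ≥0∞)) ^ l := by simp
        _ < ∞ := by
              refine ENNReal.rpow_lt_top_of_nonneg hl0.le (by simp)
    -- step 1 : I ≤ ∫ g * min^(l-1) d(map ν)
    have step1 : I ≤ ∫⁻ y, g y * (min (g y) n) ^ (l - 1) ∂(Measure.map f ν) := by
      refine lintegral_mono fun y => ?_
      rcases eq_or_ne (min (g y) (n:ℝ≥0∞)) 0 with h0 | h0
      · rw [h0, ENNReal.zero_rpow_of_pos hl0, ENNReal.zero_rpow_of_pos hl1, mul_zero]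
      · have hne : min (g y) (n:ℝ≥0∞) ≠ ∞ :=
          ne_top_of_le_ne_top (by simp) (min_le_right _ _)
        have : (min (g y) (n:ℝ≥0∞)) ^ l = (min (g y) (n:ℝ≥0∞)) * (min (g y) (n:ℝ≥0∞)) ^ (l - 1) := by
          calc (min (g y) (n:ℝ≥0∞)) ^ l = (min (g y) (n:ℝ≥0∞)) ^ (1 + (l - 1)) := by norm_num
            _ = (min (g y) (n:ℝ≥0∞)) ^ (1:ℝ) * (min (g y) (n:ℝ≥0∞)) ^ (l - 1) :=
                ENNReal.rpow_add _ _ h0 hne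
            _ = (min (g y) (n:ℝ≥0∞)) * (min (g y) (n:ℝ≥0∞)) ^ (l - 1) := by
                rw [ENNReal.rpow_one]
        rw [this]
        exact mul_le_mul_left (min_le_left _ _) _
    -- step 2 : transfer to μ then to ν
    have step2 : ∫⁻ y, g y * (min (g y) n) ^ (l - 1) ∂(Measure.map f ν)
        = ∫⁻ x, μ.rnDeriv ν x * (min (g (f x)) n) ^ (l - 1) ∂ν := by
      have hmeas : Measurable fun y => (min (g y) (n : ℝ≥0∞)) ^ (l - 1) :=
        (hgm.min measurable_const).pow_const (l - 1)
      rw [lintegral_rnDeriv_mul hmac hmeas.aemeasurable,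
        lintegral_map hmeas hf, ← lintegral_rnDeriv_mul hac (show AEMeasurable (fun x => (min (g (f x)) (n:ℝ≥0∞)) ^ (l - 1)) ν from (hmeas.comp hf).aemeasurable)]
    -- step 3 : Young's inequality pointwise
    have step3 : ∫⁻ x, μ.rnDeriv ν x * (min (g (f x)) n) ^ (l - 1) ∂ν
        ≤ ENNReal.ofReal ((l - 1) / l) * I + ENNReal.ofReal (1 / l) * J := by
      have hb : ∫⁻ x, (min (g (f x)) n) ^ l ∂ν = I := by
        rw [hI, lintegral_map hImeas hf]
      calc ∫⁻ x, μ.rnDeriv ν x * (min (g (f x)) n) ^ (l - 1) ∂ν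
          ≤ ∫⁻ x, (ENNReal.ofReal ((l - 1) / l) * (min (g (f x)) n) ^ l
              + ENNReal.ofReal (1 / l) * (μ.rnDeriv ν x) ^ l) ∂ν := by
            refine lintegral_mono fun x => young_aux hl _ _
        _ = ENNReal.ofReal ((l - 1) / l) * I + ENNReal.ofReal (1 / l) * J := by
            have hm2 : Measurable fun x => (min (g (f x)) (n:ℝ≥0∞)) ^ l :=
              ((hgm.comp hf).min measurable_const).pow_const l
            rw [lintegral_add_left (hm2.const_mul _), lintegral_const_mul _ hm2,
              lintegral_const_mul _ ((Measure.measurable_rnDeriv μ ν).pow_const l), hb, hJ]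
    -- combine and cancel
    have hcomb : I ≤ ENNReal.ofReal ((l - 1) / l) * I + ENNReal.ofReal (1 / l) * J :=
      step1.trans (step2 ▸ step3)
    have hsplit : (ENNReal.ofReal ((l - 1) / l)) + ENNReal.ofReal (1 / l) = 1 := by
      rw [← ENNReal.ofReal_add (by positivity) (by positivity), ← ENNReal.ofReal_one]
      congr 1
      field_simp
      ring
    have hIeq : I = ENNReal.ofReal ((l - 1) / l) * I + ENNReal.ofReal (1 / l) * I := by
      rw [← add_mul, hsplit, one_mul]
    have hfin : ENNReal.ofReal ((l - 1) / l) * I ≠ ∞ :=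
      ENNReal.mul_ne_top ENNReal.ofReal_ne_top hIfin.ne
    have hcomb2 := (ENNReal.add_le_add_iff_left hfin).mp (hIeq.ge.trans hcomb)
    exact (ENNReal.mul_le_mul_iff_right (by simp [ENNReal.ofReal_eq_zero]; linarith)
      ENNReal.ofReal_ne_top).mp hcomb2
  -- monotone convergence
  have hmono : Monotone fun (n : ℕ) (y : Y) => (min (g y) n) ^ l := by
    intro a b hab y
    exact ENNReal.rpow_le_rpow (min_le_min le_rfl (by exact_mod_cast Nat.cast_le.mpr hab)) hl0.le
  have hsup : ∫⁻ y, (g y) ^ l ∂(Measure.map f ν)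
      = ⨆ n : ℕ, ∫⁻ y, (min (g y) n) ^ l ∂(Measure.map f ν) := by
    rw [← lintegral_iSup (fun n => (hgm.min measurable_const).pow_const l) hmono]
    refine lintegral_congr_ae ?_
    filter_upwards [Measure.rnDeriv_lt_top (Measure.map f μ) (Measure.map f ν)] with y hy
    exact (sup_min_rpow hl hy.ne).symm
  rw [hsup]
  exact iSup_le key
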